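/- Let b : ℕ and let l : List ℕ be sorted in non-increasing order (List.Sorted (· ≥ ·) l) with every element x of l satisfying 0 < x and x ≤ b. Let g := l.foldl (fun s x => if s + x ≤ b then s + x else s) 0 be the value achieved by the greedy algorithm that scans l in order and adds an element whenever it does not overshoot b. Then (i) g ≤ b, (ii) min b l.sum ≤ 2 * g, and (iii) for every multiset m with m ≤ (l : Multiset ℕ) and m.sum ≤ b one has m.sum ≤ 2 * g; in particular the greedy solution is within a factor 2 of any feasible solution. -/

import Mathlib

private lemma greedy_le_fold (b : ℕ) : ∀ (l : List ℕ) (s : ℕ),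
    s ≤ List.foldl (fun s x => if s + x ≤ b then s + x else s) s l := by
  intro l
  induction l with
  | nil => intro s; simp
  | cons x t ih =>
    intro s
    simp only [List.foldl_cons]
    by_cases h : s + x ≤ b
    · simp only [h, if_true]
      exact le_trans (Nat.le_add_right s x) (ih _)
    · simpa [h] using ih s

private lemma greedy_fold_le (b : ℕ) : ∀ (l : List ℕ) (s : ℕ), s ≤ b →
    List.foldl (fun s x => if s + x ≤ b then s + x else s) s l ≤ b := by
  intro l
  induction l with
  | nil => intro s hs; simpa
  | cons x t ih =>
    intro s hs
    simp only [List.foldl_cons]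
    by_cases h : s + x ≤ b
    · simpa [h] using ih _ h
    · simpa [h] using ih _ hs

private lemma greedy_key (b : ℕ) : ∀ (l : List ℕ), List.Pairwise (· ≥ ·) l →
    (∀ x ∈ l, 0 < x) → (∀ x ∈ l, x ≤ b) → ∀ s, s ≤ b →
    (s = 0 ∨ ∀ x ∈ l, x ≤ s) →
    min b (s + l.sum) ≤ 2 * List.foldl (fun s x => if s + x ≤ b then s + x else s) s l := by
  intro l
  induction l with
  | nil =>
    intro _ _ _ s hs _
    simp only [List.sum_nil, Nat.add_zero, List.foldl_nil]
    omega
  | cons x t ih =>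
    intro hsort hpos hle s hs hinv
    rcases List.pairwise_cons.mp hsort with ⟨hhead, hsorted⟩
    have hx : x ≤ b := hle x (by simp)
    have hxpos : 0 < x := hpos x (by simp)
    simp only [List.foldl_cons, List.sum_cons]
    by_cases h : s + x ≤ b
    · simp only [h, if_true]
      have key := ih hsorted (fun y hy => hpos y (by simp [hy]))
        (fun y hy => hle y (by simp [hy])) (s + x) h
        (Or.inr (fun y hy => le_trans (hhead y hy) (Nat.le_add_left x s)))
      omega
    · have hs0 : s ≠ 0 := by rintro rfl; omega
      have hxs : x ≤ s := by
        rcases hinv with h0 | hall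
        · exact absurd h0 hs0
        · exact hall x (by simp)
      have hf := greedy_le_fold b t s
      simp only [h, if_false]
      omega

/-- Correctness and 2-approximation guarantee of the greedy algorithm for the
unary 0-1 knapsack maximization problem. -/
theorem greedy_knapsack_two_approx (b : ℕ) (l : List ℕ)
    (hsort : List.Pairwise (· ≥ ·) l)
    (hpos : ∀ x ∈ l, 0 < x) (hle : ∀ x ∈ l, x ≤ b) :
    let g := l.foldl (fun s x => if s + x ≤ b then s + x else s) 0
    g ≤ b ∧ min b l.sum ≤ 2 * g ∧
      ∀ m : Multiset ℕ, m ≤ (l : Multiset ℕ) → m.sum ≤ b → m.sum ≤ 2 * g := by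
  intro g
  have hgb : g ≤ b := greedy_fold_le b l 0 (Nat.zero_le b)
  have hmin : min b l.sum ≤ 2 * g := by
    have := greedy_key b l hsort hpos hle 0 (Nat.zero_le b) (Or.inl rfl)
    simpa using this
  refine ⟨hgb, hmin, fun m hm hmb => ?_⟩
  have hsum : m.sum ≤ l.sum := by
    obtain ⟨u, hu⟩ := Multiset.le_iff_exists_add.mp hm
    have : (l : Multiset ℕ).sum = m.sum + u.sum := by rw [hu, Multiset.sum_add]
    simp only [Multiset.sum_coe] at this
    omega
  omega
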